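/- Let N be an even natural number and T ⊆ Fin N a subset with |T| = t ≥ 1. Then the number of subsets S ⊆ Fin N with |S| = N/2 such that |S ∩ T| < t/3 or |S ∩ T| > 2t/3 is at most 2 · exp(−t/18) · C(N, N/2), where C(·,·) is the binomial coefficient and the inequality is between real numbers. -/

import Mathlib

open scoped BigOperators

lemma hsc_L1 (n : ℕ) : ∀ a ≤ n, 2^a * Nat.choose (2*n - a) (n - a) ≤ Nat.choose (2*n) n := by
  intro a
  induction a with
  | zero => simp
  | succ a ih =>
    intro h
    have ha : a ≤ n := Nat.le_of_succ_le h
    refine le_trans ?_ (ih ha)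
    have h1 : n - a = (n - (a+1)) + 1 := by omega
    have h2 : 2*n - a = (2*n - (a+1)) + 1 := by omega
    rw [h1, h2]
    have key := Nat.add_one_mul_choose_eq (2*n - (a+1)) (n - (a+1))
    have hge : 2 * ((n - (a+1)) + 1) ≤ (2*n - (a+1)) + 1 := by omega
    calc 2^(a+1) * Nat.choose (2*n - (a+1)) (n - (a+1))
        = 2^a * (2 * Nat.choose (2*n - (a+1)) (n - (a+1))) := by ring
      _ ≤ 2^a * Nat.choose ((2*n - (a+1)) + 1) ((n - (a+1)) + 1) := by
          apply Nat.mul_le_mul_left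
          have h3 : ((n - (a+1)) + 1) * (2 * Nat.choose (2*n - (a+1)) (n - (a+1)))
              ≤ ((n - (a+1)) + 1) * Nat.choose ((2*n - (a+1)) + 1) ((n - (a+1)) + 1) := by
            calc ((n - (a+1)) + 1) * (2 * Nat.choose (2*n - (a+1)) (n - (a+1)))
                = (2 * ((n - (a+1)) + 1)) * Nat.choose (2*n - (a+1)) (n - (a+1)) := by ring
              _ ≤ ((2*n - (a+1)) + 1) * Nat.choose (2*n - (a+1)) (n - (a+1)) :=
                  Nat.mul_le_mul_right _ hge
              _ = Nat.choose ((2*n - (a+1)) + 1) ((n - (a+1)) + 1) * ((n - (a+1)) + 1) := key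
              _ = ((n - (a+1)) + 1) * Nat.choose ((2*n - (a+1)) + 1) ((n - (a+1)) + 1) := by ring
          exact Nat.le_of_mul_le_mul_left h3 (Nat.succ_pos _)

lemma hsc_L2 {N : ℕ} (n : ℕ) (A : Finset (Fin N)) (hA : A.card ≤ n) :
    (Finset.univ.filter fun S : Finset (Fin N) => S.card = n ∧ A ⊆ S).card
      = Nat.choose (N - A.card) (n - A.card) := by
  have hcard : (Finset.univ \ A).card = N - A.card := by
    rw [Finset.card_sdiff_of_subset (Finset.subset_univ A)]
    simp
  rw [← hcard, ← Finset.card_powersetCard]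
  apply Finset.card_bij (fun S _ => S \ A)
  · intro S hS
    simp only [Finset.mem_filter, Finset.mem_univ, true_and] at hS
    rw [Finset.mem_powersetCard]
    constructor
    · exact Finset.sdiff_subset_sdiff (Finset.subset_univ S) le_rfl
    · rw [Finset.card_sdiff_of_subset hS.2, hS.1]
  · intro S1 h1 S2 h2 heq
    simp only [Finset.mem_filter, Finset.mem_univ, true_and] at h1 h2
    have : S1 \ A ∪ A = S2 \ A ∪ A := by rw [heq]
    rwa [Finset.sdiff_union_of_subset h1.2, Finset.sdiff_union_of_subset h2.2] at this
  · intro B hB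
    rw [Finset.mem_powersetCard] at hB
    have hdisj : Disjoint B A := Finset.disjoint_of_subset_left hB.1 Finset.sdiff_disjoint
    refine ⟨B ∪ A, ?_, ?_⟩
    · simp only [Finset.mem_filter, Finset.mem_univ, true_and]
      constructor
      · rw [Finset.card_union_of_disjoint hdisj, hB.2]
        omega
      · exact Finset.subset_union_right
    · rw [Finset.union_sdiff_right, Finset.sdiff_eq_self_of_disjoint hdisj]

lemma hsc_L3 {N : ℕ} (n : ℕ) (T : Finset (Fin N)) :
    ∑ S ∈ Finset.univ.filter (fun S : Finset (Fin N) => S.card = n), 2^((S ∩ T).card)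
      = ∑ A ∈ T.powerset,
          (Finset.univ.filter fun S : Finset (Fin N) => S.card = n ∧ A ⊆ S).card := by
  have step1 : ∀ S : Finset (Fin N),
      2^((S ∩ T).card) = ∑ A ∈ T.powerset, if A ⊆ S then 1 else 0 := by
    intro S
    rw [← Finset.card_filter]
    rw [← Finset.card_powerset]
    congr 1
    ext A
    simp only [Finset.mem_powerset, Finset.mem_filter, Finset.subset_inter_iff]
    tauto
  simp_rw [step1]
  rw [Finset.sum_comm]
  apply Finset.sum_congr rfl
  intro A _
  rw [Finset.sum_filter, Finset.card_filter]
  exact Finset.sum_congr rfl fun S _ => (ite_and _ _ _ _).symm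

lemma hsc_L4 {N n : ℕ} (hN : N = 2*n) (T : Finset (Fin N)) :
    ∑ S ∈ Finset.univ.filter (fun S : Finset (Fin N) => S.card = n), (2:ℝ)^((S ∩ T).card)
      ≤ ((3:ℝ)/2)^T.card * (Nat.choose N n : ℝ) := by
  have hsum : ∑ A ∈ T.powerset, ((1:ℝ)/2)^A.card = ((3:ℝ)/2)^T.card := by
    have := Finset.prod_add (fun _ : Fin N => (1:ℝ)/2) (fun _ => 1) T
    simp only [Finset.prod_const, one_pow, mul_one] at this
    rw [← this]
    norm_num
  calc ∑ S ∈ Finset.univ.filter (fun S : Finset (Fin N) => S.card = n), (2:ℝ)^((S ∩ T).card)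
      = ((∑ S ∈ Finset.univ.filter (fun S : Finset (Fin N) => S.card = n),
          2^((S ∩ T).card) : ℕ) : ℝ) := by push_cast; rfl
    _ = ∑ A ∈ T.powerset,
          ((Finset.univ.filter fun S : Finset (Fin N) => S.card = n ∧ A ⊆ S).card : ℝ) := by
        rw [hsc_L3 n T]; push_cast; rfl
    _ ≤ ∑ A ∈ T.powerset, ((1:ℝ)/2)^A.card * (Nat.choose N n : ℝ) := by
        apply Finset.sum_le_sum
        intro A _
        by_cases hA : A.card ≤ n
        · rw [hsc_L2 n A hA]
          have h1 := hsc_L1 n A.card hA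
          rw [← hN] at h1
          have h2 : ((2:ℝ))^A.card * (Nat.choose (N - A.card) (n - A.card) : ℝ)
              ≤ (Nat.choose N n : ℝ) := by exact_mod_cast h1
          have hp : (0:ℝ) < 2^A.card := by positivity
          rw [one_div, inv_pow, ← div_eq_inv_mul, le_div_iff₀ hp]
          linarith [h2]
        · have : (Finset.univ.filter fun S : Finset (Fin N) => S.card = n ∧ A ⊆ S) = ∅ := by
            apply Finset.filter_false_of_mem
            intro S _
            rintro ⟨h1, h2⟩
            exact hA (h1 ▸ Finset.card_le_card h2)
          rw [this]
          simp only [Finset.card_empty, Nat.cast_zero]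
          positivity
    _ = ((3:ℝ)/2)^T.card * (Nat.choose N n : ℝ) := by rw [← Finset.sum_mul, hsum]

lemma hsc_L5 (t : ℕ) : ((3:ℝ)/2)^t ≤ Real.exp (-(t:ℝ)/18) * (2:ℝ)^(2*(t:ℝ)/3) := by
  have h3 : Real.exp 1 ≤ 2^30 / 3^18 := le_of_lt (lt_of_lt_of_le Real.exp_one_lt_d9 (by norm_num))
  have h4 : (1:ℝ) ≤ Real.log (2^30 / 3^18) := by
    rw [← Real.log_exp 1]
    exact Real.log_le_log (Real.exp_pos 1) h3
  have h5 : Real.log ((2:ℝ)^30/3^18) = 30 * Real.log 2 - 18 * Real.log 3 := by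
    rw [Real.log_div (by positivity) (by positivity), Real.log_pow, Real.log_pow]
    push_cast; ring
  have h6 : Real.log (3/2) = Real.log 3 - Real.log 2 := Real.log_div (by norm_num) (by norm_num)
  have key : Real.log (3/2) + 1/18 ≤ 2/3 * Real.log 2 := by
    rw [h6]; rw [h5] at h4; linarith
  have h1 : ((3:ℝ)/2)^t = Real.exp ((t:ℝ) * Real.log (3/2)) := by
    rw [← Real.rpow_natCast (3/2 : ℝ) t, Real.rpow_def_of_pos (by norm_num)]
    ring_nf
  have h2 : (2:ℝ)^(2*(t:ℝ)/3) = Real.exp (Real.log 2 * (2*(t:ℝ)/3)) :=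
    Real.rpow_def_of_pos (by norm_num) _
  rw [h1, h2, ← Real.exp_add, Real.exp_le_exp]
  have ht : (0:ℝ) ≤ (t:ℝ) := Nat.cast_nonneg t
  nlinarith [key, ht]

lemma hsc_L6 {N n t : ℕ} (hN : N = 2*n) (T : Finset (Fin N)) (hT : T.card = t) :
    ((Finset.univ.filter fun S : Finset (Fin N) =>
        S.card = n ∧ ((S ∩ T).card : ℝ) > 2 * t / 3).card : ℝ)
      ≤ Real.exp (-(t:ℝ)/18) * (Nat.choose N n : ℝ) := by
  set U := Finset.univ.filter fun S : Finset (Fin N) =>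
      S.card = n ∧ ((S ∩ T).card : ℝ) > 2 * t / 3 with hU
  set X : ℝ := (2:ℝ)^(2*(t:ℝ)/3) with hX
  have hXpos : 0 < X := Real.rpow_pos_of_pos (by norm_num) _
  have h1 : (U.card : ℝ) * X ≤ ∑ S ∈ Finset.univ.filter
      (fun S : Finset (Fin N) => S.card = n), (2:ℝ)^((S ∩ T).card) := by
    have hsub : U ⊆ Finset.univ.filter (fun S : Finset (Fin N) => S.card = n) := by
      intro S hS
      simp only [hU, Finset.mem_filter] at hS ⊢
      exact ⟨hS.1, hS.2.1⟩
    calc (U.card : ℝ) * X = ∑ _S ∈ U, X := by rw [Finset.sum_const, nsmul_eq_mul]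
      _ ≤ ∑ S ∈ U, (2:ℝ)^((S ∩ T).card) := by
          apply Finset.sum_le_sum
          intro S hS
          simp only [hU, Finset.mem_filter] at hS
          rw [← Real.rpow_natCast 2 ((S ∩ T).card)]
          exact Real.rpow_le_rpow_of_exponent_le (by norm_num) (le_of_lt hS.2.2)
      _ ≤ _ := Finset.sum_le_sum_of_subset_of_nonneg hsub (fun S _ _ => by positivity)
  have h2 := hsc_L4 hN T
  rw [hT] at h2
  have h3 : (U.card : ℝ) * X ≤ (Real.exp (-(t:ℝ)/18) * X) * (Nat.choose N n : ℝ) := by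
    calc (U.card : ℝ) * X ≤ ((3:ℝ)/2)^t * (Nat.choose N n : ℝ) := le_trans h1 h2
      _ ≤ (Real.exp (-(t:ℝ)/18) * X) * (Nat.choose N n : ℝ) := by
          apply mul_le_mul_of_nonneg_right (hsc_L5 t) (Nat.cast_nonneg _)
  have := (mul_le_mul_iff_left₀ hXpos).mp (by linarith [h3] : (U.card : ℝ) * X
      ≤ (Real.exp (-(t:ℝ)/18) * (Nat.choose N n : ℝ)) * X)
  linarith

lemma hsc_L7 {N n t : ℕ} (hN : N = 2*n) (T : Finset (Fin N)) (hT : T.card = t) :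
    (Finset.univ.filter fun S : Finset (Fin N) =>
        S.card = n ∧ ((S ∩ T).card : ℝ) < t / 3).card
      = (Finset.univ.filter fun S : Finset (Fin N) =>
        S.card = n ∧ ((S ∩ T).card : ℝ) > 2 * t / 3).card := by
  have hkey : ∀ S : Finset (Fin N), ((Sᶜ ∩ T).card : ℝ) = t - ((S ∩ T).card : ℝ) := by
    intro S
    have h1 : (T ∩ S).card + (T \ S).card = T.card := Finset.card_inter_add_card_sdiff T S
    have h2 : Sᶜ ∩ T = T \ S := by
      ext x; simp [Finset.mem_sdiff, Finset.mem_inter, Finset.mem_compl, and_comm]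
    rw [h2, Finset.inter_comm]
    rw [hT] at h1
    have h4 : ((T ∩ S).card : ℝ) + ((T \ S).card : ℝ) = (t : ℝ) := by exact_mod_cast h1
    linarith
  apply Finset.card_bij (fun S _ => Sᶜ)
  · intro S hS
    simp only [Finset.mem_filter, Finset.mem_univ, true_and] at hS ⊢
    constructor
    · rw [Finset.card_compl, hS.1, hN]
      simp; omega
    · rw [hkey S]; linarith [hS.2]
  · intro S1 _ S2 _ h
    have := congrArg (·ᶜ) h
    simpa using this
  · intro S hS
    simp only [Finset.mem_filter, Finset.mem_univ, true_and] at hS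
    refine ⟨Sᶜ, ?_, by simp⟩
    simp only [Finset.mem_filter, Finset.mem_univ, true_and]
    constructor
    · rw [Finset.card_compl, hS.1, hN]; simp; omega
    · rw [hkey S]; linarith [hS.2]

/-- For an even `N` and a `t`-element subset `T` of `Fin N` with `t ≥ 1`, the number of
`N/2`-element subsets `S` whose intersection with `T` has fewer than `t/3` or more than
`2t/3` elements is at most `2 · e^(−t/18) · C(N, N/2)`. -/
theorem hoeffding_subset_count (N t : ℕ) (hN : Even N) (T : Finset (Fin N))
    (hT : T.card = t) (ht : 1 ≤ t) :
    ((Finset.univ.filter fun S : Finset (Fin N) =>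
        S.card = N / 2 ∧
          (((S ∩ T).card : ℝ) < t / 3 ∨ ((S ∩ T).card : ℝ) > 2 * t / 3)).card : ℝ) ≤
      2 * Real.exp (-(t : ℝ) / 18) * (Nat.choose N (N / 2) : ℝ) := by
  have hn : N = 2 * (N / 2) := by obtain ⟨m, hm⟩ := hN; omega
  set L := Finset.univ.filter fun S : Finset (Fin N) =>
      S.card = N / 2 ∧ ((S ∩ T).card : ℝ) < t / 3 with hLdef
  set U := Finset.univ.filter fun S : Finset (Fin N) =>
      S.card = N / 2 ∧ ((S ∩ T).card : ℝ) > 2 * t / 3 with hUdef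
  have hsub : (Finset.univ.filter fun S : Finset (Fin N) =>
      S.card = N / 2 ∧
        (((S ∩ T).card : ℝ) < t / 3 ∨ ((S ∩ T).card : ℝ) > 2 * t / 3)) ⊆ L ∪ U := by
    intro S hS
    simp only [hLdef, hUdef, Finset.mem_union, Finset.mem_filter, Finset.mem_univ,
      true_and] at hS ⊢
    tauto
  have hLU : L.card = U.card := hsc_L7 hn T hT
  have hUb : (U.card : ℝ) ≤ Real.exp (-(t:ℝ)/18) * (Nat.choose N (N / 2) : ℝ) :=
    hsc_L6 hn T hT
  calc ((Finset.univ.filter fun S : Finset (Fin N) =>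
        S.card = N / 2 ∧
          (((S ∩ T).card : ℝ) < t / 3 ∨ ((S ∩ T).card : ℝ) > 2 * t / 3)).card : ℝ)
      ≤ ((L ∪ U).card : ℝ) := by exact_mod_cast Finset.card_le_card hsub
    _ ≤ (L.card : ℝ) + (U.card : ℝ) := by exact_mod_cast Finset.card_union_le L U
    _ = 2 * (U.card : ℝ) := by rw [hLU]; ring
    _ ≤ 2 * (Real.exp (-(t:ℝ)/18) * (Nat.choose N (N / 2) : ℝ)) := by linarith
    _ = 2 * Real.exp (-(t : ℝ) / 18) * (Nat.choose N (N / 2) : ℝ) := by ring
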